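/- arXiv:2510.18547 — 2 statements merged into one kernel-verified Lean document; each statement's English description precedes it below -/
import Mathlib

section
/- Let U, V, F be real Banach spaces, K : V → U a continuous linear operator, h ∈ V, and c : U × F → V a map. Let v₀ ∈ V and f₀ ∈ F satisfy v₀ + c(K v₀, f₀) − h = 0. Assume there is ρ > 0 such that c is continuously Fréchet differentiable on the open ball of radius ρ centred at (K v₀, f₀) in U × F, that for every (u, f) in the closed ball of radius ρ/2 centred at (K v₀, f₀) the partial Fréchet derivative D₂c(u, f) : F → V is a continuous linear bijection with continuous inverse, and that A := sup ‖D₁c(u, f)‖ and B := sup ‖(D₂c(u, f))⁻¹‖, both suprema taken over this closed ball, are finite. Then there exist ε, δ > 0 and a map e from the open ball B_V(v₀, ε) into the open ball B_F(f₀, δ) such that v + c(K v, e(v)) − h = 0 for every v ∈ B_V(v₀, ε), and e is Lipschitz with constant B(1 + A‖K‖): for all v₁, v₂ ∈ B_V(v₀, ε), ‖e(v₁) − e(v₂)‖_F ≤ B(1 + A‖K‖) ‖v₁ − v₂‖_V. -/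
open ContinuousLinearMap


open Metric

set_option maxHeartbeats 1000000 in
/-- Let `U, V, F` be real Banach spaces, `K : V → U` a continuous linear
operator, `h ∈ V`, and `c : U × F → V`.  Let `v₀ ∈ V`, `f₀ ∈ F` satisfy
`v₀ + c (K v₀, f₀) − h = 0`.  Assume `c` is continuously Fréchet differentiable on the open
ball of radius `ρ > 0` around `(K v₀, f₀)`, that on the closed ball of radius `ρ/2` the
partial derivative `D₂c (u, f) : F → V` is a continuous linear bijection with continuous
inverse, and that `A = sup ‖D₁c (u, f)‖` and `B = sup ‖(D₂c (u, f))⁻¹‖` over this closed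
ball are finite.  Then there exist `ε, δ > 0` and a map `e : B_V(v₀, ε) → B_F(f₀, δ)` with
`v + c (K v, e v) − h = 0` on `B_V(v₀, ε)`, Lipschitz with constant `B (1 + A ‖K‖)`. -/
theorem stmt0 {U V F : Type*}
    [NormedAddCommGroup U] [NormedSpace ℝ U] [CompleteSpace U]
    [NormedAddCommGroup V] [NormedSpace ℝ V] [CompleteSpace V]
    [NormedAddCommGroup F] [NormedSpace ℝ F] [CompleteSpace F]
    (K : V →L[ℝ] U) (h : V) (c : U × F → V) (v₀ : V) (f₀ : F)
    (hsol : v₀ + c (K v₀, f₀) - h = 0)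
    (ρ : ℝ) (hρ : 0 < ρ)
    (hc : ContDiffOn ℝ 1 c (ball ((K v₀ : U), f₀) ρ))
    (A B : ℝ)
    (hA : ∀ u : U, ∀ f : F, (u, f) ∈ closedBall ((K v₀ : U), f₀) (ρ / 2) →
      ‖fderiv ℝ (fun u' => c (u', f)) u‖ ≤ A)
    (hB : ∀ u : U, ∀ f : F, (u, f) ∈ closedBall ((K v₀ : U), f₀) (ρ / 2) →
      ∃ T : V →L[ℝ] F,
        (∀ x : F, T (fderiv ℝ (fun f' => c (u, f')) f x) = x) ∧
        (∀ y : V, fderiv ℝ (fun f' => c (u, f')) f (T y) = y) ∧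
        ‖T‖ ≤ B) :
    ∃ ε > 0, ∃ δ > 0, ∃ e : V → F,
      (∀ v ∈ ball v₀ ε, e v ∈ ball f₀ δ ∧ v + c (K v, e v) - h = 0) ∧
      (∀ v₁ ∈ ball v₀ ε, ∀ v₂ ∈ ball v₀ ε,
        ‖e v₁ - e v₂‖ ≤ B * (1 + A * ‖K‖) * ‖v₁ - v₂‖) := by
  classical
  have hA0 : 0 ≤ A :=
    le_trans (norm_nonneg _) (hA (K v₀) f₀ (mem_closedBall_self (by positivity)))
  obtain ⟨T₀, -, -, hT₀⟩ := hB (K v₀) f₀ (mem_closedBall_self (by positivity))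
  have hB0 : 0 ≤ B := le_trans (norm_nonneg _) hT₀
  set C : ℝ := B * (1 + A * ‖K‖) with hC
  set Ψ : V × F → V × V := fun p => (p.1, p.1 + c (K p.1, p.2) - h) with hΨdef
  set m : (V × F) →L[ℝ] (U × F) := (K.comp (fst ℝ V F)).prod (snd ℝ V F) with hm
  have key : ∀ p : V × F, ((K p.1 : U), p.2) ∈ closedBall ((K v₀ : U), f₀) (ρ/2) →
      ∃ Ψ' : (V × F) ≃L[ℝ] (V × V),
        HasStrictFDerivAt Ψ (Ψ' : (V × F) →L[ℝ] (V × V)) p ∧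
        ∀ a : V, ‖(Ψ'.symm (a, 0)).2‖ ≤ C * ‖a‖ := by
    rintro ⟨v, f⟩ hmem
    have hmemb : ((K v : U), f) ∈ ball ((K v₀ : U), f₀) ρ :=
      mem_ball.mpr (lt_of_le_of_lt (mem_closedBall.mp hmem) (by linarith))
    have hcd : ContDiffAt ℝ 1 c ((K v : U), f) := hc.contDiffAt (isOpen_ball.mem_nhds hmemb)
    set Dc := fderiv ℝ c ((K v : U), f) with hDc
    have hcs : HasStrictFDerivAt c Dc ((K v : U), f) := hcd.hasStrictFDerivAt one_ne_zero
    have hcda : HasFDerivAt c Dc ((K v : U), f) := hcs.hasFDerivAt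
    have hpart2 : HasFDerivAt (fun f' => c ((K v : U), f')) (Dc.comp (inr ℝ U F)) f :=
      hcda.comp f (hasFDerivAt_prodMk_right _ _)
    have hpart1 : HasFDerivAt (fun u' => c (u', f)) (Dc.comp (inl ℝ U F)) (K v) :=
      hcda.comp (K v) (hasFDerivAt_prodMk_left _ _)
    obtain ⟨T, hT1, hT2, hTB⟩ := hB (K v) f hmem
    rw [hpart2.fderiv] at hT1 hT2
    have hDA : ‖Dc.comp (inl ℝ U F)‖ ≤ A := by rw [← hpart1.fderiv]; exact hA (K v) f hmem
    set L : (V × F) →L[ℝ] (V × V) := (fst ℝ V F).prod ((fst ℝ V F) + Dc.comp m) with hL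
    set Linv : (V × V) →L[ℝ] (V × F) :=
      (fst ℝ V V).prod (T.comp ((snd ℝ V V) - (fst ℝ V V) -
        ((Dc.comp (inl ℝ U F)).comp (K.comp (fst ℝ V V))))) with hLinv
    have h₁ : Function.LeftInverse Linv L := by
      rintro ⟨a, b⟩
      have e1 : L (a, b) = (a, a + Dc (K a, b)) := rfl
      have e2 : Linv (a, a + Dc (K a, b)) = (a, T (a + Dc (K a, b) - a - Dc (K a, 0))) := rfl
      rw [e1, e2]
      have : a + Dc (K a, b) - a - Dc (K a, 0) = Dc ((K a, b) - (K a, 0)) := by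
        rw [map_sub]; abel
      rw [this]
      have : ((K a, b) - ((K a : U), (0:F))) = ((0:U), b) := by simp [Prod.ext_iff]
      rw [this]
      exact Prod.ext rfl (hT1 b)
    have h₂ : Function.RightInverse Linv L := by
      rintro ⟨a, b⟩
      have e2 : Linv (a, b) = (a, T (b - a - Dc (K a, 0))) := rfl
      have e1 : L (a, T (b - a - Dc (K a, 0))) = (a, a + Dc (K a, T (b - a - Dc (K a, 0)))) := rfl
      rw [e2, e1]
      have hsp : ((K a : U), T (b - a - Dc (K a, 0))) = ((K a, (0:F)) : U × F) + ((0:U), T (b - a - Dc (K a, 0))) := by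
        simp [Prod.ext_iff]
      refine Prod.ext rfl ?_
      show a + Dc (K a, T (b - a - Dc (K a, 0))) = b
      rw [hsp, map_add]
      have : Dc ((0:U), T (b - a - Dc (K a, 0))) = b - a - Dc (K a, 0) := hT2 _
      rw [this]; abel
    set Ψ' : (V × F) ≃L[ℝ] (V × V) := ContinuousLinearEquiv.equivOfInverse L Linv h₁ h₂ with hΨ'
    have hcoe : (Ψ' : (V × F) →L[ℝ] (V × V)) = L := rfl
    refine ⟨Ψ', ?_, ?_⟩
    · rw [hcoe, hL]
      have hfst : HasStrictFDerivAt (fun p : V × F => p.1) (fst ℝ V F) (v, f) :=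
        hasStrictFDerivAt_fst
      have hcm : HasStrictFDerivAt (fun p : V × F => c (K p.1, p.2)) (Dc.comp m) (v, f) :=
        hcs.comp (v, f) (m.hasStrictFDerivAt)
      exact hfst.prodMk ((hfst.add hcm).sub_const h)
    · intro a
      have hsa : Ψ'.symm (a, (0:V)) = Linv (a, 0) := rfl
      rw [hsa]
      have e2 : Linv (a, (0:V)) = (a, T ((0:V) - a - Dc (K a, 0))) := rfl
      rw [e2]
      show ‖T ((0:V) - a - Dc (K a, 0))‖ ≤ C * ‖a‖
      have h1 : ‖T ((0:V) - a - Dc (K a, 0))‖ ≤ B * ‖(0:V) - a - Dc (K a, 0)‖ :=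
        le_trans (T.le_opNorm _) (by gcongr)
      have h2 : ‖(0:V) - a - Dc (K a, 0)‖ = ‖a + Dc (K a, 0)‖ := by
        rw [show (0:V) - a - Dc (K a, 0) = -(a + Dc (K a, 0)) by abel, norm_neg]
      have h3 : ‖Dc ((K a : U), (0:F))‖ ≤ A * (‖K‖ * ‖a‖) := by
        have : Dc ((K a : U), (0:F)) = (Dc.comp (inl ℝ U F)) (K a) := rfl
        rw [this]
        calc ‖(Dc.comp (inl ℝ U F)) (K a)‖ ≤ ‖Dc.comp (inl ℝ U F)‖ * ‖K a‖ := le_opNorm _ _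
        _ ≤ A * (‖K‖ * ‖a‖) := by
            have := K.le_opNorm a
            gcongr
      calc ‖T ((0:V) - a - Dc (K a, 0))‖ ≤ B * ‖a + Dc (K a, 0)‖ := by rw [← h2]; exact h1
      _ ≤ B * (‖a‖ + A * (‖K‖ * ‖a‖)) := by
          gcongr
          exact le_trans (norm_add_le _ _) (by linarith [h3])
      _ = C * ‖a‖ := by rw [hC]; ring
  have hC0 : (0:ℝ) ≤ C := by rw [hC]; positivity
  have hmem0 : ((K v₀ : U), f₀) ∈ closedBall ((K v₀ : U), f₀) (ρ/2) :=
    mem_closedBall_self (by positivity)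
  obtain ⟨Ψ'₀, hΨ₀, _⟩ := key (v₀, f₀) hmem0
  set Φ := hΨ₀.toOpenPartialHomeomorph Ψ with hΦ
  have hΨp₀ : Ψ (v₀, f₀) = (v₀, (0:V)) := by
    show (v₀, v₀ + c (K v₀, f₀) - h) = (v₀, 0)
    rw [hsol]
  have hsrc : (v₀, f₀) ∈ Φ.source := hΨ₀.mem_toOpenPartialHomeomorph_source
  have ht0 : (v₀, (0:V)) ∈ Φ.target := by
    rw [← hΨp₀]; exact hΨ₀.image_mem_toOpenPartialHomeomorph_target
  have hsymm0 : Φ.symm (v₀, (0:V)) = (v₀, f₀) := by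
    rw [← hΨp₀]; exact Φ.left_inv hsrc
  set e : V → F := fun v => (Φ.symm (v, (0:V))).2 with he
  have hcontsymm : ContinuousAt Φ.symm (v₀, (0:V)) := Φ.continuousAt_symm ht0
  have hc1 : ContinuousAt (fun v : V => Φ.symm (v, (0:V))) v₀ :=
    ContinuousAt.comp (f := fun v : V => (v, (0:V))) (x := v₀) hcontsymm
      (continuousAt_id.prodMk continuousAt_const)
  have hconte : ContinuousAt (fun v : V => (Φ.symm (v, (0:V))).2) v₀ := hc1.snd
  have hS : {v : V | (v, (0:V)) ∈ Φ.target ∧ (Φ.symm (v, (0:V))).2 ∈ ball f₀ (ρ/2)}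
      ∈ nhds v₀ := by
    have h1 : {v : V | (v, (0:V)) ∈ Φ.target} ∈ nhds v₀ :=
      (continuous_id.prodMk continuous_const).continuousAt.preimage_mem_nhds
        (Φ.open_target.mem_nhds ht0)
    have h2 : {v : V | (Φ.symm (v, (0:V))).2 ∈ ball f₀ (ρ/2)} ∈ nhds v₀ := by
      apply hconte.preimage_mem_nhds
      apply isOpen_ball.mem_nhds
      rw [hsymm0]
      exact mem_ball_self (by positivity)
    exact Filter.inter_mem h1 h2
  obtain ⟨ε₁, hε₁pos, hballS⟩ := Metric.mem_nhds_iff.mp hS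
  set ε : ℝ := min ε₁ (ρ / (2 * (‖K‖ + 1))) with hε
  have hεpos : 0 < ε := lt_min hε₁pos (by positivity)
  have main : ∀ v ∈ ball v₀ ε, (v, (0:V)) ∈ Φ.target ∧ Φ.symm (v,(0:V)) = (v, e v) ∧
      e v ∈ ball f₀ (ρ/2) ∧ ((K v : U), e v) ∈ closedBall ((K v₀:U), f₀) (ρ/2) ∧
      v + c (K v, e v) - h = 0 := by
    intro v hv
    have hv1 : v ∈ ball v₀ ε₁ :=
      mem_ball.mpr (lt_of_lt_of_le (mem_ball.mp hv) (min_le_left _ _))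
    obtain ⟨hvt, hef⟩ := hballS hv1
    have hfix : Ψ (Φ.symm (v, (0:V))) = (v, 0) := Φ.right_inv hvt
    have hfst : (Φ.symm (v, (0:V))).1 = v := congrArg Prod.fst hfix
    have hsymm : Φ.symm (v, (0:V)) = (v, e v) := Prod.ext hfst rfl
    have heq : v + c (K v, e v) - h = 0 := by
      have h2 := congrArg Prod.snd hfix
      rw [hsymm] at h2
      exact h2
    have hvle : ‖v - v₀‖ ≤ ρ / (2 * (‖K‖ + 1)) :=
      le_of_lt (lt_of_lt_of_le (by rw [← dist_eq_norm]; exact mem_ball.mp hv)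
        (min_le_right _ _))
    have hKv : dist (K v) (K v₀) ≤ ρ/2 := by
      rw [dist_eq_norm, ← map_sub]
      calc ‖K (v - v₀)‖ ≤ ‖K‖ * ‖v - v₀‖ := K.le_opNorm _
      _ ≤ ‖K‖ * (ρ / (2 * (‖K‖ + 1))) := by gcongr
      _ ≤ ρ/2 := by
          rw [← mul_div_assoc, div_le_iff₀ (by positivity)]
          nlinarith [norm_nonneg K, hρ]
    have hmemcb : ((K v : U), e v) ∈ closedBall ((K v₀:U), f₀) (ρ/2) := by
      rw [mem_closedBall, Prod.dist_eq]
      exact max_le hKv (le_of_lt (mem_ball.mp hef))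
    exact ⟨hvt, hsymm, hef, hmemcb, heq⟩
  have hder : ∀ v ∈ ball v₀ ε, ∃ E' : V →L[ℝ] F, HasFDerivAt e E' v ∧ ‖E'‖ ≤ C := by
    intro v hv
    obtain ⟨hvt, hsymm, hef, hmemcb, heq⟩ := main v hv
    obtain ⟨Ψ', hΨ', hbound⟩ := key (v, e v) hmemcb
    have hgc : ContinuousAt Φ.symm (v, (0:V)) := Φ.continuousAt_symm hvt
    have hfa : HasFDerivAt Ψ (Ψ' : (V × F) →L[ℝ] (V × V)) (Φ.symm (v, (0:V))) := by
      rw [hsymm]; exact hΨ'.hasFDerivAt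
    have hev : ∀ᶠ y in nhds (v, (0:V)), Ψ (Φ.symm y) = y :=
      Filter.Eventually.mono (Φ.open_target.eventually_mem hvt) (fun y hy => Φ.right_inv hy)
    have hginv : HasFDerivAt Φ.symm ((Ψ'.symm : (V × V) →L[ℝ] (V × F))) (v, (0:V)) :=
      HasFDerivAt.of_local_left_inverse hgc hfa hev
    have hcomp : HasFDerivAt (fun v' : V => Φ.symm (v', (0:V)))
        ((Ψ'.symm : (V × V) →L[ℝ] (V × F)).comp (inl ℝ V V)) v :=
      hginv.comp v ((inl ℝ V V).hasFDerivAt)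
    have hE : HasFDerivAt e
        ((snd ℝ V F).comp ((Ψ'.symm : (V × V) →L[ℝ] (V × F)).comp (inl ℝ V V))) v :=
      ((snd ℝ V F).hasFDerivAt).comp v hcomp
    refine ⟨_, hE, ?_⟩
    refine opNorm_le_bound _ hC0 (fun a => ?_)
    exact hbound a
  choose E' hE1 hE2 using hder
  have hlip : ∀ v₁ ∈ ball v₀ ε, ∀ v₂ ∈ ball v₀ ε, ‖e v₁ - e v₂‖ ≤ C * ‖v₁ - v₂‖ := by
    intro v₁ h1 v₂ h2
    exact (convex_ball v₀ ε).norm_image_sub_le_of_norm_hasFDerivWithin_le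
      (f' := fun v => if hv : v ∈ ball v₀ ε then E' v hv else 0)
      (fun x hx => by simp only [dif_pos hx]; exact (hE1 x hx).hasFDerivWithinAt)
      (fun x hx => by simp only [dif_pos hx]; exact hE2 x hx) h2 h1
  exact ⟨ε, hεpos, ρ/2, half_pos hρ, e, fun v hv => ⟨(main v hv).2.2.1, (main v hv).2.2.2.2⟩, hlip⟩
end

section
/- Let U, V, F be real Banach spaces, K : V → U a continuous linear operator, h ∈ V, and c : U × F → V continuously Fréchet differentiable on an open set W ⊆ U × F. Let e be a continuous map from an open ball B_V(v₀, ε) ⊆ V into F such that (K v, e(v)) ∈ W and v + c(K v, e(v)) − h = 0 for every v ∈ B_V(v₀, ε), and such that at every such point the partial derivative D₂c(K v, e(v)) : F → V is a continuous linear bijection with continuous inverse. Then e is Fréchet differentiable at every v ∈ B_V(v₀, ε) with De(v) = −(D₂c(K v, e(v)))⁻¹ ∘ (id_V + D₁c(K v, e(v)) ∘ K); in particular ‖De(v)‖ ≤ ‖(D₂c(K v, e(v)))⁻¹‖ · (1 + ‖D₁c(K v, e(v))‖ · ‖K‖). -/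
open Metric

/-- Let `U, V, F` be real Banach spaces, `K : V → U` a continuous linear
operator, `h ∈ V`, and `c : U × F → V` continuously Fréchet differentiable on an open set
`W ⊆ U × F`.  Let `e` be continuous on the ball `B_V(v₀, ε)` with `(K v, e v) ∈ W` and
`v + c (K v, e v) − h = 0` there, and assume at each such point `D₂c (K v, e v)` is a
continuous linear bijection with continuous inverse `T v`.  Then `e` is Fréchet
differentiable at every `v ∈ B_V(v₀, ε)` with
`De (v) = −(D₂c (K v, e v))⁻¹ ∘ (id_V + D₁c (K v, e v) ∘ K)`; in particular
`‖De (v)‖ ≤ ‖(D₂c (K v, e v))⁻¹‖ (1 + ‖D₁c (K v, e v)‖ ‖K‖)`. -/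
theorem stmt2 {U V F : Type*}
    [NormedAddCommGroup U] [NormedSpace ℝ U] [CompleteSpace U]
    [NormedAddCommGroup V] [NormedSpace ℝ V] [CompleteSpace V]
    [NormedAddCommGroup F] [NormedSpace ℝ F] [CompleteSpace F]
    (K : V →L[ℝ] U) (h : V) (c : U × F → V)
    (W : Set (U × F)) (hW : IsOpen W) (hc : ContDiffOn ℝ 1 c W)
    (v₀ : V) (ε : ℝ) (hε : 0 < ε) (e : V → F)
    (he : ContinuousOn e (ball v₀ ε))
    (hmem : ∀ v ∈ ball v₀ ε, ((K v : U), e v) ∈ W)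
    (hsol : ∀ v ∈ ball v₀ ε, v + c ((K v : U), e v) - h = 0)
    (T : V → (V →L[ℝ] F))
    (hT : ∀ v ∈ ball v₀ ε,
      (∀ x : F, T v (fderiv ℝ (fun f' => c ((K v : U), f')) (e v) x) = x) ∧
      (∀ y : V, fderiv ℝ (fun f' => c ((K v : U), f')) (e v) (T v y) = y)) :
    ∀ v ∈ ball v₀ ε,
      HasFDerivAt e
        (-((T v).comp (ContinuousLinearMap.id ℝ V +
            (fderiv ℝ (fun u => c (u, e v)) (K v : U)).comp K))) v ∧
      ‖-((T v).comp (ContinuousLinearMap.id ℝ V +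
            (fderiv ℝ (fun u => c (u, e v)) (K v : U)).comp K))‖ ≤
        ‖T v‖ * (1 + ‖fderiv ℝ (fun u => c (u, e v)) (K v : U)‖ * ‖K‖) := by
  intro v hv
  have hmemv := hmem v hv
  have hcp : ContDiffAt ℝ 1 c ((K v : U), e v) := hc.contDiffAt (hW.mem_nhds hmemv)
  set A : (U × F) →L[ℝ] V := fderiv ℝ c ((K v : U), e v) with hAdef
  have hA : HasStrictFDerivAt c A ((K v : U), e v) := hcp.hasStrictFDerivAt one_ne_zero
  -- partial derivatives
  have h1 : HasFDerivAt (fun u => c (u, e v)) (A.comp (ContinuousLinearMap.inl ℝ U F)) (K v) :=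
    hA.hasFDerivAt.comp (K v) (hasFDerivAt_prodMk_left (K v) (e v))
  have h2 : HasFDerivAt (fun f' => c ((K v : U), f')) (A.comp (ContinuousLinearMap.inr ℝ U F))
      (e v) := hA.hasFDerivAt.comp (e v) (hasFDerivAt_prodMk_right (K v) (e v))
  have hd1 : fderiv ℝ (fun u => c (u, e v)) (K v) = A.comp (ContinuousLinearMap.inl ℝ U F) :=
    h1.fderiv
  have hd2 : fderiv ℝ (fun f' => c ((K v : U), f')) (e v) =
      A.comp (ContinuousLinearMap.inr ℝ U F) := h2.fderiv
  obtain ⟨hTl, hTr⟩ := hT v hv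
  rw [hd2] at hTl hTr
  have hsplit : ∀ (u : U) (f : F), A (u, f) = A (u, 0) + A (0, f) := by
    intro u f
    rw [← map_add]
    simp
  -- the linearization and its inverse
  set L : (V × F) →L[ℝ] (U × F) :=
    (K.comp (ContinuousLinearMap.fst ℝ V F)).prod (ContinuousLinearMap.snd ℝ V F) with hLdef
  set D : (V × F) →L[ℝ] (V × V) :=
    (ContinuousLinearMap.fst ℝ V F).prod ((ContinuousLinearMap.fst ℝ V F) + A.comp L) with hDdef
  set B : (V × V) →L[ℝ] (V × F) :=
    (ContinuousLinearMap.fst ℝ V V).prod ((T v).comp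
      ((ContinuousLinearMap.snd ℝ V V) - (ContinuousLinearMap.fst ℝ V V) -
        (A.comp (ContinuousLinearMap.inl ℝ U F)).comp
          (K.comp (ContinuousLinearMap.fst ℝ V V)))) with hBdef
  have hBD : Function.LeftInverse B D := by
    rintro ⟨w, φ⟩
    show (w, T v ((w + A (K w, φ)) - w - A (K w, 0))) = (w, φ)
    refine Prod.ext rfl ?_
    have hx : (w + A (K w, φ)) - w - A (K w, 0) = A (0, φ) := by
      rw [hsplit (K w) φ]; abel
    have hTl' := hTl φ
    simp only [ContinuousLinearMap.comp_apply, ContinuousLinearMap.inr_apply] at hTl'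
    rw [hx]; exact hTl'
  have hDB : Function.RightInverse B D := by
    rintro ⟨w, y⟩
    show (w, w + A (K w, T v (y - w - A (K w, 0)))) = (w, y)
    refine Prod.ext rfl ?_
    have hz : A (0, T v (y - w - A (K w, 0))) = y - w - A (K w, 0) := by
      have := hTr (y - w - A (K w, 0))
      simpa [ContinuousLinearMap.comp_apply, ContinuousLinearMap.inr_apply] using this
    rw [hsplit (K w) (T v (y - w - A (K w, 0))), hz]
    module
  set E : (V × F) ≃L[ℝ] (V × V) := ContinuousLinearEquiv.equivOfInverse D B hBD hDB with hEdef
  set Φ : V × F → V × V := fun q => (q.1, q.1 + c ((K q.1 : U), q.2) - h) with hΦdef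
  have hEcoe : (E : (V × F) →L[ℝ] (V × V)) = D :=
    ContinuousLinearMap.ext fun x => rfl
  have hDΦ : HasStrictFDerivAt Φ (E : (V × F) →L[ℝ] (V × V)) (v, e v) := by
    rw [hEcoe]
    refine HasStrictFDerivAt.prodMk (ContinuousLinearMap.fst ℝ V F).hasStrictFDerivAt ?_
    refine (HasStrictFDerivAt.add (ContinuousLinearMap.fst ℝ V F).hasStrictFDerivAt ?_).sub_const h
    exact hA.comp (v, e v) L.hasStrictFDerivAt
  have hΦv : Φ (v, e v) = (v, 0) := by
    have := hsol v hv
    simp [hΦdef, this]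
  set g := hDΦ.localInverse Φ E (v, e v) with hgdef
  have hleft : ∀ᶠ q in nhds (v, e v), g (Φ q) = q := hDΦ.eventually_left_inverse
  have hcontp : ContinuousAt (fun v' : V => (v', e v')) v :=
    continuousAt_id.prodMk (he.continuousAt (isOpen_ball.mem_nhds hv))
  have hev1 : ∀ᶠ v' in nhds v, g (Φ (v', e v')) = (v', e v') := hcontp.eventually hleft
  have hev2 : ∀ᶠ v' in nhds v, v' ∈ ball v₀ ε := isOpen_ball.eventually_mem hv
  have hefe : e =ᶠ[nhds v] fun v' => (g (v', 0)).2 := by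
    filter_upwards [hev1, hev2] with v' h1' h2'
    have hΦ' : Φ (v', e v') = (v', 0) := by
      have := hsol v' h2'
      simp [hΦdef, this]
    rw [hΦ'] at h1'
    rw [h1']
  -- derivative computation
  have hg : HasStrictFDerivAt g ((E.symm : (V × V) →L[ℝ] (V × F))) (v, 0) := by
    have := hDΦ.to_localInverse
    rwa [hΦv] at this
  have hinl : HasFDerivAt (fun v' : V => ((v' : V), (0 : V)))
      (ContinuousLinearMap.inl ℝ V V) v := (ContinuousLinearMap.inl ℝ V V).hasFDerivAt
  have hcomp : HasFDerivAt (fun v' => (g (v', 0)).2)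
      ((ContinuousLinearMap.snd ℝ V F).comp
        ((E.symm : (V × V) →L[ℝ] (V × F)).comp (ContinuousLinearMap.inl ℝ V V))) v := by
    exact (ContinuousLinearMap.snd ℝ V F).hasFDerivAt.comp v
      ((hg.hasFDerivAt.comp v hinl))
  have hde : HasFDerivAt e
      ((ContinuousLinearMap.snd ℝ V F).comp
        ((E.symm : (V × V) →L[ℝ] (V × F)).comp (ContinuousLinearMap.inl ℝ V V))) v :=
    hcomp.congr_of_eventuallyEq hefe
  have hEsymm : (E.symm : (V × V) →L[ℝ] (V × F)) = B := by
    rw [hEdef, ContinuousLinearEquiv.symm_equivOfInverse]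
    exact ContinuousLinearMap.ext fun x => rfl
  have hMeq : (ContinuousLinearMap.snd ℝ V F).comp
        ((E.symm : (V × V) →L[ℝ] (V × F)).comp (ContinuousLinearMap.inl ℝ V V)) =
      -((T v).comp (ContinuousLinearMap.id ℝ V +
        (fderiv ℝ (fun u => c (u, e v)) (K v : U)).comp K)) := by
    rw [hd1, hEsymm]
    ext w
    simp [hBdef, ContinuousLinearMap.comp_apply, ContinuousLinearMap.prod_apply]
    rw [← map_neg (T v)]
    congr 1
    abel
  rw [hMeq] at hde
  refine ⟨hde, ?_⟩
  rw [hd1, norm_neg]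
  calc ‖(T v).comp (ContinuousLinearMap.id ℝ V +
          (A.comp (ContinuousLinearMap.inl ℝ U F)).comp K)‖
      ≤ ‖T v‖ * ‖ContinuousLinearMap.id ℝ V +
          (A.comp (ContinuousLinearMap.inl ℝ U F)).comp K‖ :=
        ContinuousLinearMap.opNorm_comp_le _ _
    _ ≤ ‖T v‖ * (1 + ‖A.comp (ContinuousLinearMap.inl ℝ U F)‖ * ‖K‖) := by
        refine mul_le_mul_of_nonneg_left ?_ (norm_nonneg _)
        refine le_trans (norm_add_le _ _) ?_
        exact add_le_add (ContinuousLinearMap.norm_id_le)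
          (ContinuousLinearMap.opNorm_comp_le _ _)
end
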